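/- Every monomial factor algebra S/I with depth S/I ≤ 1 satisfies Stanley's conjecture, i.e., sdepth S/I ≥ depth S/I. -/
import Mathlib


open MvPolynomial

/-- The monomial `x^c = x_1^{c 1} ⋯ x_n^{c n}` in `K[x_1,…,x_n]`. -/
noncomputable def monX (n : ℕ) (K : Type*) [Field K] (c : Fin n → ℕ) :
    MvPolynomial (Fin n) K := ∏ i, X i ^ c i

/-- `ρ(b) = |{k : b k = g k}|`. -/
def rho {n : ℕ} (g b : Fin n → ℕ) : ℕ := (Finset.univ.filter fun k => b k = g k).card

/-- The `j`-th skeleton ideal of `I` with respect to `g`: the ideal generated by `I`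
together with all monomials `x^b` with `ρ(b) > j`. -/
noncomputable def skel {n : ℕ} (K : Type*) [Field K]
    (I : Ideal (MvPolynomial (Fin n) K)) (g : Fin n → ℕ) (j : ℕ) :
    Ideal (MvPolynomial (Fin n) K) :=
  I ⊔ Ideal.span {m | ∃ b : Fin n → ℕ, j < rho g b ∧ m = monX n K b}

/-- The characteristic poset `P^g_{S/I} = {b ∈ ℕ^n : b ≤ g, x^b ∉ I}`. -/
def charPoset {n : ℕ} (K : Type*) [Field K]
    (I : Ideal (MvPolynomial (Fin n) K)) (g : Fin n → ℕ) : Set (Fin n → ℕ) :=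
  {b | b ≤ g ∧ monX n K b ∉ I}

/-- The characteristic poset `P^g_{J/I} = {b ∈ ℕ^n : b ≤ g, x^b ∈ J \ I}`. -/
def charPoset2 {n : ℕ} (K : Type*) [Field K]
    (I J : Ideal (MvPolynomial (Fin n) K)) (g : Fin n → ℕ) : Set (Fin n → ℕ) :=
  {b | b ≤ g ∧ monX n K b ∈ J ∧ monX n K b ∉ I}

/-- The graded maximal ideal `m = (x_1,…,x_n)`. -/
noncomputable def mxId (n : ℕ) (K : Type*) [Field K] : Ideal (MvPolynomial (Fin n) K) :=
  Ideal.span (Set.range (X : Fin n → MvPolynomial (Fin n) K))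

/-- The depth of a module over `S = K[x_1,…,x_n]` with respect to the graded
maximal ideal: the supremum of lengths of regular sequences contained in `m`. -/
noncomputable def mdepth (n : ℕ) (K : Type*) [Field K] (M : Type*) [AddCommGroup M]
    [Module (MvPolynomial (Fin n) K) M] : ℕ :=
  sSup {r | ∃ rs : List (MvPolynomial (Fin n) K), rs.length = r ∧
    (∀ x ∈ rs, x ∈ mxId n K) ∧ RingTheory.Sequence.IsRegular M rs}

/-- Krull dimension of a module: `dim S/ann M`. -/
noncomputable def mdim (n : ℕ) (K : Type*) [Field K] (M : Type*) [AddCommGroup M]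
    [Module (MvPolynomial (Fin n) K) M] : WithBot (WithTop ℕ) :=
  ringKrullDim (MvPolynomial (Fin n) K ⧸ Module.annihilator (MvPolynomial (Fin n) K) M)

/-- `M` is a Cohen–Macaulay `S`-module of dimension `j`. -/
noncomputable def IsCMof (n : ℕ) (K : Type*) [Field K] (M : Type*) [AddCommGroup M]
    [Module (MvPolynomial (Fin n) K) M] (j : ℕ) : Prop :=
  mdepth n K M = j ∧ mdim n K M = (j : WithBot (WithTop ℕ))

/-- `M` is a Cohen–Macaulay `S`-module (depth = Krull dimension). -/
noncomputable def IsCM (n : ℕ) (K : Type*) [Field K] (M : Type*) [AddCommGroup M]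
    [Module (MvPolynomial (Fin n) K) M] : Prop :=
  (mdepth n K M : WithBot (WithTop ℕ)) = mdim n K M

/-- A partition of a subset `P` of `ℕ^n` into (nonempty) intervals `[cᵢ, dᵢ]`. -/
structure IntervalPartition {n : ℕ} (P : Set (Fin n → ℕ)) where
  r : ℕ
  c : Fin r → (Fin n → ℕ)
  d : Fin r → (Fin n → ℕ)
  le : ∀ i, c i ≤ d i
  cover : P = ⋃ i, Set.Icc (c i) (d i)
  disj : Pairwise (Function.onFun Disjoint fun i => Set.Icc (c i) (d i))

/-- The (combinatorial) Stanley depth of `S/I`: the maximum over interval partitions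
of the characteristic poset `P^g_{S/I}` of `min_i ρ(dᵢ)` (Herzog–Vladoiu–Zheng). -/
noncomputable def sdepthQ {n : ℕ} (K : Type*) [Field K]
    (I : Ideal (MvPolynomial (Fin n) K)) (g : Fin n → ℕ) : ℕ :=
  sSup {t | ∃ P : IntervalPartition (charPoset K I g), ∀ i, t ≤ rho g (P.d i)}

/-- The set of exponents `{c + e : supp e ⊆ Z}`, i.e. the exponents of the monomials
spanning the Stanley space `x^c K[Z]`. -/
def orth {n : ℕ} (c : Fin n → ℕ) (Z : Finset (Fin n)) : Set (Fin n → ℕ) :=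
  {b | c ≤ b ∧ ∀ k ∉ Z, b k = c k}

/-- A Stanley decomposition of `J/I` (for monomial ideals `I ⊆ J`), encoded by the
induced partition of the monomial `K`-basis of `J/I` into Stanley spaces `x^{cᵢ} K[Zᵢ]`. -/
structure StanleyDec {n : ℕ} (K : Type*) [Field K]
    (I J : Ideal (MvPolynomial (Fin n) K)) where
  r : ℕ
  c : Fin r → (Fin n → ℕ)
  Z : Fin r → Finset (Fin n)
  cover : {b | monX n K b ∈ J ∧ monX n K b ∉ I} = ⋃ i, orth (c i) (Z i)
  disj : Pairwise (Function.onFun Disjoint fun i => orth (c i) (Z i))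

/-- The `h`-regularity of `J/I`: the minimum over Stanley decompositions of `max_i |cᵢ|`. -/
noncomputable def hregQ {n : ℕ} (K : Type*) [Field K]
    (I J : Ideal (MvPolynomial (Fin n) K)) : ℕ :=
  sInf {h | ∃ D : StanleyDec K I J, ∀ i, (∑ k, D.c i k) ≤ h}

/-- `σ(Pt) = max_i max{|c| : c ∈ [cᵢ,dᵢ], c k = cᵢ k for all k with dᵢ k = g k}`. -/
noncomputable def sigmaP {n : ℕ} (g : Fin n → ℕ) {P : Set (Fin n → ℕ)}
    (Pt : IntervalPartition P) : ℕ :=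
  sSup {s | ∃ i : Fin Pt.r, ∃ cc ∈ Set.Icc (Pt.c i) (Pt.d i),
    (∀ k, Pt.d i k = g k → cc k = Pt.c i k) ∧ s = ∑ k, cc k}

/-- The truncation `I_{≥ j}`: the ideal generated by all homogeneous elements of `I`
of degree at least `j`. -/
noncomputable def trunc {n : ℕ} (K : Type*) [Field K]
    (I : Ideal (MvPolynomial (Fin n) K)) (j : ℕ) : Ideal (MvPolynomial (Fin n) K) :=
  Ideal.span {f | f ∈ I ∧ ∃ d, j ≤ d ∧ MvPolynomial.IsHomogeneous f d}

/-- A `d`-linear (graded free) resolution of the ideal `I`: a finite exact complex of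
finite free modules augmented to `I`, in which the entries of the augmentation are
homogeneous of degree `d` and all entries of the differentials are linear forms. -/
structure LinearRes {n : ℕ} (K : Type*) [Field K]
    (I : Ideal (MvPolynomial (Fin n) K)) (d : ℕ) where
  len : ℕ
  b : ℕ → ℕ
  fin : ∀ i, len < i → b i = 0
  ε : (Fin (b 0) →₀ MvPolynomial (Fin n) K) →ₗ[MvPolynomial (Fin n) K]
      MvPolynomial (Fin n) K
  δ : ∀ i : ℕ, (Fin (b (i+1)) →₀ MvPolynomial (Fin n) K) →ₗ[MvPolynomial (Fin n) K]
      (Fin (b i) →₀ MvPolynomial (Fin n) K)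
  hε : ∀ j, MvPolynomial.IsHomogeneous (ε (Finsupp.single j 1)) d
  hδ : ∀ i j k, MvPolynomial.IsHomogeneous ((δ i (Finsupp.single j 1)) k) 1
  surj : LinearMap.range ε = (I : Submodule (MvPolynomial (Fin n) K) (MvPolynomial (Fin n) K))
  exact0 : LinearMap.ker ε = LinearMap.range (δ 0)
  exact : ∀ i, LinearMap.ker (δ i) = LinearMap.range (δ (i+1))

/-- The Castelnuovo–Mumford regularity of `I`, via the Eisenbud–Goto characterization
`reg(I) = min{d : I_{≥ d} has a d-linear resolution}`. -/
noncomputable def regEG {n : ℕ} (K : Type*) [Field K]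
    (I : Ideal (MvPolynomial (Fin n) K)) : ℕ :=
  sInf {d | Nonempty (LinearRes K (trunc K I d) d)}


section Aux
variable {n : ℕ} {K : Type*} [Field K]

lemma monX_add (u v : Fin n → ℕ) : monX n K (u + v) = monX n K u * monX n K v := by
  simp [monX, pow_add, Finset.prod_mul_distrib]

lemma monX_zero : monX n K 0 = 1 := by simp [monX]

lemma monX_mem_of_le {I : Ideal (MvPolynomial (Fin n) K)} {u v : Fin n → ℕ}
    (h : u ≤ v) (hu : monX n K u ∈ I) : monX n K v ∈ I := by
  have hv : v = u + (v - u) := funext fun k => (Nat.add_sub_cancel' (h k)).symm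
  rw [hv, monX_add]
  exact Ideal.mul_mem_right _ _ hu

lemma monX_single (k : Fin n) : monX n K (Pi.single k 1) = X k := by
  rw [monX]
  rw [Finset.prod_eq_single k (fun i _ hi => by simp [Pi.single_eq_of_ne hi])
    (fun h => absurd (Finset.mem_univ k) h)]
  simp

lemma monX_mul_X (u : Fin n → ℕ) (k : Fin n) :
    monX n K u * X k = monX n K (u + Pi.single k 1) := by
  rw [monX_add, monX_single]

/-- If `z ∈ m` is "regular" on `S/I` and `x^b ∉ I`, then some coordinate can be
raised to `g` staying outside `I`. -/
lemma exists_good {I : Ideal (MvPolynomial (Fin n) K)} {g : Fin n → ℕ}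
    {z : MvPolynomial (Fin n) K} (hz : z ∈ mxId n K)
    (hreg : ∀ u, z * u ∈ I → u ∈ I)
    {b : Fin n → ℕ} (hb : monX n K b ∉ I) :
    ∃ k, monX n K (Function.update b k (g k)) ∉ I := by
  by_contra hbad
  push_neg at hbad
  -- every v with large total degree pushes b into I
  have key : ∀ v : Fin n → ℕ, (∑ k, g k) < (∑ k, v k) → monX n K (b + v) ∈ I := by
    intro v hv
    have : ∃ k, g k < v k := by
      by_contra h'
      push_neg at h'
      exact absurd (Finset.sum_le_sum fun k _ => h' k) (not_le.2 hv)
    obtain ⟨k, hk⟩ := this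
    refine monX_mem_of_le (u := Function.update b k (g k)) ?_ (hbad k)
    intro j
    rcases eq_or_ne j k with rfl | hjk
    · simpa using le_trans hk.le (Nat.le_add_left _ _)
    · rw [Function.update_of_ne hjk]
      exact Nat.le_add_right _ _
  -- z = ∑ c k * X k
  rw [mxId, Ideal.span] at hz
  rw [Submodule.mem_span_range_iff_exists_fun] at hz
  obtain ⟨c, hc⟩ := hz
  -- J t
  set J : ℕ → Ideal (MvPolynomial (Fin n) K) := fun t =>
    Ideal.span {m | ∃ v : Fin n → ℕ, (∑ k, v k) = t ∧ m = monX n K (b + v)} with hJ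
  have hstep : ∀ t, ∀ w ∈ J t, z * w ∈ J (t + 1) := by
    intro t w hw
    induction hw using Submodule.span_induction with
    | mem p hp =>
      obtain ⟨v, hv, rfl⟩ := hp
      rw [← hc, Finset.sum_mul]
      refine Ideal.sum_mem _ fun k _ => ?_
      have : c k • X k * monX n K (b + v) = c k * monX n K (b + (v + Pi.single k 1)) := by
        rw [smul_eq_mul, mul_assoc, mul_comm (X k), monX_mul_X, ← add_assoc]
      rw [this]
      refine Ideal.mul_mem_left _ _ (Ideal.subset_span ⟨v + Pi.single k 1, ?_, rfl⟩)
      simp [Finset.sum_add_distrib, hv]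
    | zero => simp
    | add p q _ _ hp hq => rw [mul_add]; exact Ideal.add_mem _ hp hq
    | smul r p _ hp =>
      rw [smul_eq_mul, mul_left_comm]
      exact Ideal.mul_mem_left _ _ hp
  have hpow : ∀ t, z ^ t * monX n K b ∈ J t := by
    intro t
    induction t with
    | zero =>
      rw [pow_zero, one_mul]
      have hb0 : monX n K b = monX n K (b + 0) := by simp
      rw [hb0]
      exact Ideal.subset_span ⟨0, by simp, rfl⟩
    | succ t ih =>
      have : z ^ (t + 1) * monX n K b = z * (z ^ t * monX n K b) := by ring
      rw [this]
      exact hstep t _ ih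
  have hJI : J ((∑ k, g k) + 1) ≤ I := by
    rw [hJ, Ideal.span_le]
    rintro m ⟨v, hv, rfl⟩
    exact key v (by omega)
  have hfin : z ^ ((∑ k, g k) + 1) * monX n K b ∈ I := hJI (hpow _)
  -- regularity kills powers
  have hcancel : ∀ t (u : MvPolynomial (Fin n) K), z ^ t * u ∈ I → u ∈ I := by
    intro t
    induction t with
    | zero => intro u hu; simpa using hu
    | succ t ih =>
      intro u hu
      rw [pow_succ, mul_assoc] at hu
      exact hreg u (ih _ hu)
  exact hb (hcancel _ _ hfin)

end Aux

noncomputable section PartAux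

variable {n : ℕ} (K : Type*) [Field K] (I : Ideal (MvPolynomial (Fin n) K)) (g : Fin n → ℕ)

open Classical in
/-- The set of "good" directions at `b`. -/
noncomputable def goodF (b : Fin n → ℕ) : Finset (Fin n) :=
  Finset.univ.filter fun k => monX n K (Function.update b k (g k)) ∉ I

lemma mem_goodF {b : Fin n → ℕ} {k : Fin n} :
    k ∈ goodF K I g b ↔ monX n K (Function.update b k (g k)) ∉ I := by
  simp [goodF]

lemma goodF_anti {b1 b2 : Fin n → ℕ} (h : b1 ≤ b2) : goodF K I g b2 ⊆ goodF K I g b1 := by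
  intro j hj
  rw [mem_goodF] at hj ⊢
  intro hIn
  exact hj (monX_mem_of_le (fun m => by
    rcases eq_or_ne m j with rfl | hm
    · simp
    · rw [Function.update_of_ne hm, Function.update_of_ne hm]; exact h m) hIn)

/-- `k` is the minimal good direction at `update b k t`. -/
def isMinGood (b : Fin n → ℕ) (k : Fin n) (t : ℕ) : Prop :=
  k ∈ goodF K I g (Function.update b k t) ∧ ∀ j ∈ goodF K I g (Function.update b k t), k ≤ j

lemma isMinGood_update (b : Fin n → ℕ) (k : Fin n) (s t : ℕ) :
    isMinGood K I g (Function.update b k s) k t ↔ isMinGood K I g b k t := by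
  rw [isMinGood, isMinGood, Function.update_idem]

lemma k_mem_goodF_update (b : Fin n → ℕ) (k : Fin n) (t : ℕ) :
    k ∈ goodF K I g (Function.update b k t) ↔ k ∈ goodF K I g b := by
  rw [mem_goodF, mem_goodF, Function.update_idem]

lemma isMinGood_mono {b : Fin n → ℕ} {k : Fin n} {t t' : ℕ} (h1 : t ≤ t')
    (h : isMinGood K I g b k t) : isMinGood K I g b k t' := by
  obtain ⟨hk, hmin⟩ := h
  have hle : Function.update b k t ≤ Function.update b k t' := fun m => by
    rcases eq_or_ne m k with rfl | hm
    · simpa using h1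
    · rw [Function.update_of_ne hm, Function.update_of_ne hm]
  refine ⟨?_, fun j hj => hmin j (goodF_anti K I g hle hj)⟩
  rw [k_mem_goodF_update] at hk ⊢
  exact hk

open Classical in
noncomputable def kdir [Nonempty (Fin n)] (b : Fin n → ℕ) : Fin n :=
  if h : (goodF K I g b).Nonempty then (goodF K I g b).min' h else Classical.arbitrary _

open Classical in
noncomputable def tmin [Nonempty (Fin n)] (b : Fin n → ℕ) : ℕ :=
  if h : ∃ t, isMinGood K I g b (kdir K I g b) t then Nat.find h else 0

noncomputable def cbase [Nonempty (Fin n)] (b : Fin n → ℕ) : Fin n → ℕ :=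
  Function.update b (kdir K I g b) (tmin K I g b)

noncomputable def ctop [Nonempty (Fin n)] (b : Fin n → ℕ) : Fin n → ℕ :=
  Function.update b (kdir K I g b) (g (kdir K I g b))

end PartAux

section Partition

variable {n : ℕ} {K : Type*} [Field K] {I : Ideal (MvPolynomial (Fin n) K)} {g : Fin n → ℕ}

lemma exists_partition (hne : (1 : MvPolynomial (Fin n) K) ∉ I)
    (Hgood : ∀ b, monX n K b ∉ I → ∃ k, monX n K (Function.update b k (g k)) ∉ I) :
    ∃ P : IntervalPartition (charPoset K I g), ∀ i, 1 ≤ rho g (P.d i) := by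
  classical
  have h0P : (0 : Fin n → ℕ) ∈ charPoset K I g :=
    ⟨fun k => Nat.zero_le _, by rw [monX_zero]; exact hne⟩
  haveI hn : Nonempty (Fin n) := by
    obtain ⟨k, -⟩ := Hgood 0 h0P.2
    exact ⟨k⟩
  -- basic facts for members of the poset
  have hGne : ∀ b ∈ charPoset K I g, (goodF K I g b).Nonempty := by
    intro b hb
    obtain ⟨k, hk⟩ := Hgood b hb.2
    exact ⟨k, (mem_goodF K I g).2 hk⟩
  have hkmin : ∀ b ∈ charPoset K I g, isMinGood K I g b (kdir K I g b) (b (kdir K I g b)) := by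
    intro b hb
    have hk : kdir K I g b = (goodF K I g b).min' (hGne b hb) := dif_pos (hGne b hb)
    rw [isMinGood, Function.update_eq_self, hk]
    exact ⟨Finset.min'_mem _ _, fun j hj => Finset.min'_le _ _ hj⟩
  have hex : ∀ b ∈ charPoset K I g, ∃ t, isMinGood K I g b (kdir K I g b) t :=
    fun b hb => ⟨b (kdir K I g b), hkmin b hb⟩
  have htmin_spec : ∀ b (hb : b ∈ charPoset K I g),
      isMinGood K I g b (kdir K I g b) (tmin K I g b) := by
    intro b hb
    rw [tmin, dif_pos (hex b hb)]
    exact Nat.find_spec (hex b hb)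
  have htmin_le : ∀ b (hb : b ∈ charPoset K I g), tmin K I g b ≤ b (kdir K I g b) := by
    intro b hb
    rw [tmin, dif_pos (hex b hb)]
    exact Nat.find_le (hkmin b hb)
  have htmin_min : ∀ b (hb : b ∈ charPoset K I g) t, isMinGood K I g b (kdir K I g b) t →
      tmin K I g b ≤ t := by
    intro b hb t ht
    rw [tmin, dif_pos (hex b hb)]
    exact Nat.find_le ht
  have hself : ∀ b ∈ charPoset K I g, b ∈ Set.Icc (cbase K I g b) (ctop K I g b) := by
    intro b hb
    constructor
    · intro m
      rcases eq_or_ne m (kdir K I g b) with rfl | hm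
      · rw [cbase, Function.update_self]; exact htmin_le b hb
      · rw [cbase, Function.update_of_ne hm]
    · intro m
      rcases eq_or_ne m (kdir K I g b) with rfl | hm
      · rw [ctop, Function.update_self]; exact hb.1 _
      · rw [ctop, Function.update_of_ne hm]
  -- the key invariance
  have hinv : ∀ b ∈ charPoset K I g, ∀ x ∈ Set.Icc (cbase K I g b) (ctop K I g b),
      x ∈ charPoset K I g ∧ cbase K I g x = cbase K I g b ∧ ctop K I g x = ctop K I g b := by
    intro b hb x hx
    have hxform : x = Function.update b (kdir K I g b) (x (kdir K I g b)) := by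
      funext m
      rcases eq_or_ne m (kdir K I g b) with rfl | hm
      · simp
      · rw [Function.update_of_ne hm]
        have h1 := hx.1 m
        have h2 := hx.2 m
        rw [cbase, Function.update_of_ne hm] at h1
        rw [ctop, Function.update_of_ne hm] at h2
        exact le_antisymm h2 h1
    have hxk_lb : tmin K I g b ≤ x (kdir K I g b) := by
      have := hx.1 (kdir K I g b)
      rwa [cbase, Function.update_self] at this
    have hxk_ub : x (kdir K I g b) ≤ g (kdir K I g b) := by
      have := hx.2 (kdir K I g b)
      rwa [ctop, Function.update_self] at this
    have hxtop : x ≤ ctop K I g b := by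
      intro m
      rcases eq_or_ne m (kdir K I g b) with rfl | hm
      · rw [ctop, Function.update_self]; exact hxk_ub
      · rw [ctop, Function.update_of_ne hm]
        rw [hxform, Function.update_of_ne hm]
    have hctopI : monX n K (ctop K I g b) ∉ I := by
      have := (htmin_spec b hb).1
      rw [k_mem_goodF_update, mem_goodF] at this
      rw [ctop]
      exact this
    have hxP : x ∈ charPoset K I g := by
      refine ⟨fun m => ?_, fun hIn => hctopI (monX_mem_of_le hxtop hIn)⟩
      rcases eq_or_ne m (kdir K I g b) with rfl | hm
      · exact hxk_ub
      · rw [hxform, Function.update_of_ne hm]; exact hb.1 m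
    have hminx : isMinGood K I g b (kdir K I g b) (x (kdir K I g b)) :=
      isMinGood_mono K I g hxk_lb (htmin_spec b hb)
    have hminx' : isMinGood K I g x (kdir K I g b) (x (kdir K I g b)) := by
      have h' := (isMinGood_update K I g b (kdir K I g b) (x (kdir K I g b))
        (x (kdir K I g b))).2 hminx
      rwa [← hxform] at h'
    have hgoodx : kdir K I g b ∈ goodF K I g x := by
      have := hminx'.1
      rwa [Function.update_eq_self] at this
    have hminx'' : ∀ j ∈ goodF K I g x, kdir K I g b ≤ j := by
      have := hminx'.2
      rwa [Function.update_eq_self] at this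
    have hGxne : (goodF K I g x).Nonempty := ⟨kdir K I g b, hgoodx⟩
    have hkx : kdir K I g x = kdir K I g b := by
      rw [kdir, dif_pos hGxne]
      exact le_antisymm (Finset.min'_le _ _ hgoodx) (hminx'' _ (Finset.min'_mem _ _))
    have hMG_iff : ∀ t, isMinGood K I g x (kdir K I g b) t ↔
        isMinGood K I g b (kdir K I g b) t := by
      intro t
      conv_lhs => rw [hxform]
      rw [isMinGood_update]
    have htx : tmin K I g x = tmin K I g b := by
      apply le_antisymm
      · apply htmin_min x hxP
        rw [hkx, hMG_iff]
        exact htmin_spec b hb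
      · apply htmin_min b hb
        rw [← hMG_iff]
        have := htmin_spec x hxP
        rwa [hkx] at this
    refine ⟨hxP, ?_, ?_⟩
    · rw [cbase, cbase, hkx, htx]
      conv_lhs => rw [hxform]
      rw [Function.update_idem]
    · rw [ctop, ctop, hkx]
      conv_lhs => rw [hxform]
      rw [Function.update_idem]
  -- the indexing
  have hfinP : (charPoset K I g).Finite :=
    Set.Finite.subset (Set.finite_Icc 0 g) fun b hb => ⟨fun k => Nat.zero_le _, hb.1⟩
  have hfinIm : ((fun b => (cbase K I g b, ctop K I g b)) '' charPoset K I g).Finite :=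
    hfinP.image _
  set F : Finset ((Fin n → ℕ) × (Fin n → ℕ)) := hfinIm.toFinset with hF
  have hFmem : ∀ p : (Fin n → ℕ) × (Fin n → ℕ), p ∈ F ↔
      ∃ b ∈ charPoset K I g, (cbase K I g b, ctop K I g b) = p := by
    intro p
    rw [hF, Set.Finite.mem_toFinset]
    simp [Set.mem_image]
  let e : Fin F.card ≃ F := F.equivFin.symm
  refine ⟨⟨F.card, fun i => (e i).val.1, fun i => (e i).val.2, ?_, ?_, ?_⟩, ?_⟩
  · intro i
    obtain ⟨b, hb, hp⟩ := (hFmem _).1 (e i).2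
    have h1 : (e i).val.1 = cbase K I g b := (congrArg Prod.fst hp).symm
    have h2 : (e i).val.2 = ctop K I g b := (congrArg Prod.snd hp).symm
    show (e i).val.1 ≤ (e i).val.2
    rw [h1, h2]
    exact le_trans (hself b hb).1 (hself b hb).2
  · ext x
    simp only [Set.mem_iUnion]
    constructor
    · intro hx
      have hpF : (cbase K I g x, ctop K I g x) ∈ F := (hFmem _).2 ⟨x, hx, rfl⟩
      refine ⟨e.symm ⟨_, hpF⟩, ?_⟩
      show x ∈ Set.Icc (e (e.symm ⟨_, hpF⟩)).val.1 (e (e.symm ⟨_, hpF⟩)).val.2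
      rw [e.apply_symm_apply]
      exact hself x hx
    · rintro ⟨i, hxi⟩
      obtain ⟨b, hb, hp⟩ := (hFmem _).1 (e i).2
      have h1 : (e i).val.1 = cbase K I g b := (congrArg Prod.fst hp).symm
      have h2 : (e i).val.2 = ctop K I g b := (congrArg Prod.snd hp).symm
      have hxi' : x ∈ Set.Icc (cbase K I g b) (ctop K I g b) := by
        rw [← h1, ← h2]; exact hxi
      exact (hinv b hb x hxi').1
  · intro i j hij
    rw [Function.onFun, Set.disjoint_left]
    intro x hxi hxj
    obtain ⟨b1, hb1, hp1⟩ := (hFmem _).1 (e i).2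
    obtain ⟨b2, hb2, hp2⟩ := (hFmem _).1 (e j).2
    have h1i : (e i).val.1 = cbase K I g b1 := (congrArg Prod.fst hp1).symm
    have h2i : (e i).val.2 = ctop K I g b1 := (congrArg Prod.snd hp1).symm
    have h1j : (e j).val.1 = cbase K I g b2 := (congrArg Prod.fst hp2).symm
    have h2j : (e j).val.2 = ctop K I g b2 := (congrArg Prod.snd hp2).symm
    have hx1 : x ∈ Set.Icc (cbase K I g b1) (ctop K I g b1) := by
      rw [← h1i, ← h2i]; exact hxi
    have hx2 : x ∈ Set.Icc (cbase K I g b2) (ctop K I g b2) := by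
      rw [← h1j, ← h2j]; exact hxj
    obtain ⟨-, hc1, ht1⟩ := hinv b1 hb1 x hx1
    obtain ⟨-, hc2, ht2⟩ := hinv b2 hb2 x hx2
    apply hij
    have hval : (e i).val = (e j).val := by
      apply Prod.ext
      · rw [h1i, h1j, ← hc1, ← hc2]
      · rw [h2i, h2j, ← ht1, ← ht2]
    exact e.injective (Subtype.ext hval)
  · intro i
    obtain ⟨b, hb, hp⟩ := (hFmem _).1 (e i).2
    have h2 : (e i).val.2 = ctop K I g b := (congrArg Prod.snd hp).symm
    have hcoord : (e i).val.2 (kdir K I g b) = g (kdir K I g b) := by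
      rw [h2, ctop, Function.update_self]
    rw [rho, Nat.one_le_iff_ne_zero, ← Nat.pos_iff_ne_zero, Finset.card_pos]
    exact ⟨kdir K I g b, Finset.mem_filter.2 ⟨Finset.mem_univ _, hcoord⟩⟩

end Partition

/-- every monomial factor algebra `S/I` with `depth S/I ≤ 1` satisfies
Stanley's conjecture `sdepth S/I ≥ depth S/I`. -/
theorem stanley_depth_le_one (n m : ℕ) (K : Type*) [Field K]
    (a : Fin m → (Fin n → ℕ)) (I : Ideal (MvPolynomial (Fin n) K))
    (hI : I = Ideal.span (Set.range fun i => monX n K (a i)))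
    (hmin : ∀ i j, i ≠ j → ¬ a i ≤ a j)
    (g : Fin n → ℕ) (hg : ∀ i, a i ≤ g)
    (hdepth : mdepth n K (MvPolynomial (Fin n) K ⧸ I) ≤ 1) :
    mdepth n K (MvPolynomial (Fin n) K ⧸ I) ≤ sdepthQ K I g := by
  classical
  by_cases h0 : mdepth n K (MvPolynomial (Fin n) K ⧸ I) = 0
  · rw [h0]; exact Nat.zero_le _
  have h1 : mdepth n K (MvPolynomial (Fin n) K ⧸ I) = 1 := le_antisymm hdepth (by omega)
  -- extract a regular element
  set A : Set ℕ := {r | ∃ rs : List (MvPolynomial (Fin n) K), rs.length = r ∧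
    (∀ x ∈ rs, x ∈ mxId n K) ∧
    RingTheory.Sequence.IsRegular (MvPolynomial (Fin n) K ⧸ I) rs} with hA
  have hmd : mdepth n K (MvPolynomial (Fin n) K ⧸ I) = sSup A := rfl
  have hAne : A.Nonempty := by
    by_contra h
    rw [Set.not_nonempty_iff_eq_empty] at h
    rw [hmd, h, csSup_empty] at h1
    simp at h1
  have hAbdd : BddAbove A := by
    by_contra h
    rw [hmd, csSup_of_not_bddAbove h, csSup_empty] at h1
    simp at h1
  have hA1 : (1 : ℕ) ∈ A := by
    have := Nat.sSup_mem hAne hAbdd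
    rwa [← hmd, h1] at this
  obtain ⟨rs, hlen, hmx, hreg⟩ := hA1
  obtain ⟨z, rfl⟩ : ∃ z, rs = [z] := by
    match rs, hlen with
    | [z], _ => exact ⟨z, rfl⟩
  have hz : z ∈ mxId n K := hmx z (by simp)
  have hinj : IsSMulRegular (MvPolynomial (Fin n) K ⧸ I) z :=
    (RingTheory.Sequence.isWeaklyRegular_singleton_iff _ z).mp hreg.toIsWeaklyRegular
  have hregI : ∀ u, z * u ∈ I → u ∈ I := by
    intro u hu
    have hq : (Ideal.Quotient.mk I) (z * u) = 0 := (Ideal.Quotient.eq_zero_iff_mem).2 hu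
    have h2 : z • (Ideal.Quotient.mk I u) = z • (0 : MvPolynomial (Fin n) K ⧸ I) := by
      rw [smul_zero, ← hq]
      rfl
    exact (Ideal.Quotient.eq_zero_iff_mem).1 (hinj h2)
  have hne1 : (1 : MvPolynomial (Fin n) K) ∉ I := by
    intro hone
    have hIT : I = ⊤ := (Ideal.eq_top_iff_one I).2 hone
    have hsub : Subsingleton (MvPolynomial (Fin n) K ⧸ I) :=
      Ideal.Quotient.subsingleton_iff.2 hIT
    exact hreg.top_ne_smul (Subsingleton.elim _ _)
  have Hgood : ∀ b : Fin n → ℕ, monX n K b ∉ I →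
      ∃ k, monX n K (Function.update b k (g k)) ∉ I :=
    fun b hb => exists_good hz hregI hb
  obtain ⟨Pt, hPt⟩ := exists_partition hne1 Hgood
  -- bound sdepthQ from below
  rw [h1, sdepthQ]
  have hbddS : BddAbove {t | ∃ P : IntervalPartition (charPoset K I g),
      ∀ i, t ≤ rho g (P.d i)} := by
    refine ⟨n, fun t ht => ?_⟩
    obtain ⟨P', hP'⟩ := ht
    have h0P : (0 : Fin n → ℕ) ∈ charPoset K I g :=
      ⟨fun k => Nat.zero_le _, by rw [monX_zero]; exact hne1⟩
    rw [P'.cover, Set.mem_iUnion] at h0P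
    obtain ⟨i, -⟩ := h0P
    refine le_trans (hP' i) ?_
    calc rho g (P'.d i) ≤ Finset.univ.card := Finset.card_filter_le _ _
    _ = n := Finset.card_fin n
  exact le_csSup hbddS ⟨Pt, hPt⟩
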